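/- For every x = (x₁,x₂) in the upper half plane H, the one-form β_H(x) = w(x)/(x₂(4+|x|²)) with w(x) = (2x₁x₂, x₂²-x₁²-4) satisfies |β_H(x)|_{g_h} = |w(x)|/(4+|x|²) < 1, where g_h is the hyperbolic metric (g_h)_x = (1/x₂²)·(Euclidean metric); hence (H, F_H) is a Randers space. -/

import Mathlib

noncomputable section

/-- The Euclidean plane. -/
abbrev E2 := EuclideanSpace ℝ (Fin 2)

/-- The open unit disk. -/
def Dset : Set E2 := {x | ‖x‖ < 1}

/-- The upper half plane. -/
def Hset : Set E2 := {x | x 1 > 0}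

/-- w(x) = (2x₁x₂, x₂²-x₁²-4). -/
def wH (x : E2) : E2 := WithLp.toLp 2 (![2 * x 0 * x 1, x 1 ^ 2 - x 0 ^ 2 - 4])

/-- The one-form of the Finsler-Poincaré upper half plane metric. -/
def betaH (x : E2) : E2 := (1 / (x 1 * (4 + ‖x‖ ^ 2))) • wH x

lemma norm_sq_E2 (y : E2) : ‖y‖ ^ 2 = (y 0) ^ 2 + (y 1) ^ 2 := by
  rw [EuclideanSpace.norm_eq, Real.sq_sqrt (by positivity)]
  simp [Fin.sum_univ_two, sq_abs]

theorem betaH_hyperbolic_norm_lt_one (x : E2) (hx : x ∈ Hset) :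
    x 1 * ‖betaH x‖ = ‖wH x‖ / (4 + ‖x‖ ^ 2) ∧ ‖wH x‖ / (4 + ‖x‖ ^ 2) < 1 := by
  have hx1 : x 1 > 0 := hx
  have hpos : (0:ℝ) < 4 + ‖x‖ ^ 2 := by positivity
  constructor
  · rw [betaH, norm_smul]
    rw [Real.norm_eq_abs, abs_of_pos (by positivity)]
    field_simp
  · have hwsq : ‖wH x‖ ^ 2 = (4 + ‖x‖ ^ 2) ^ 2 - 16 * (x 1) ^ 2 := by
      rw [norm_sq_E2, norm_sq_E2]
      simp only [wH, WithLp.ofLp_toLp, Matrix.cons_val_zero, Matrix.cons_val_one, Matrix.head_cons]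
      ring
    have hlt : ‖wH x‖ ^ 2 < (4 + ‖x‖ ^ 2) ^ 2 := by nlinarith
    have : ‖wH x‖ < 4 + ‖x‖ ^ 2 := by nlinarith [norm_nonneg (wH x)]
    rw [div_lt_one hpos]
    exact this
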